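/- arXiv:2009.01667 — 5 statements merged into one kernel-verified Lean document; each statement's English description precedes it below -/
import Mathlib

section
/- For every positive integer m, we have 8·∑_{d∣m} (-1)^{m+d} d = 8·|2^{k+1} − 3|·σ(m/2^k), where 2^k is the exact power of 2 dividing m (i.e., 2^k ∣ m and 2^{k+1} ∤ m) and σ denotes the sum-of-divisors function. -/
/-- Sum-of-divisors function. -/
def sigma (n : ℕ) : ℕ := ∑ d ∈ n.divisors, d

lemma geomSumTwo (n : ℕ) : ∑ i ∈ Finset.range n, (2 : ℤ) ^ i = 2 ^ n - 1 := by
  induction n with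
  | zero => simp
  | succ n ih => rw [Finset.sum_range_succ, ih]; ring

theorem stmt_0 (m k : ℕ) (hm : 0 < m) (hk : 2 ^ k ∣ m) (hk' : ¬ 2 ^ (k + 1) ∣ m) :
    8 * ∑ d ∈ m.divisors, (-1 : ℤ) ^ (m + d) * (d : ℤ) =
      8 * |(2 : ℤ) ^ (k + 1) - 3| * (sigma (m / 2 ^ k) : ℤ) := by
  obtain ⟨m', rfl⟩ := hk
  have h2k : 0 < 2 ^ k := Nat.pow_pos (by norm_num)
  have hm' : 0 < m' := Nat.pos_of_mul_pos_left (by rwa [mul_comm] at hm)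
  have hodd : ¬ 2 ∣ m' := by
    rintro ⟨c, rfl⟩
    exact hk' ⟨c, by ring⟩
  have hquot : 2 ^ k * m' / 2 ^ k = m' := Nat.mul_div_cancel_left _ h2k
  rw [hquot]
  have hcop : Nat.Coprime (2 ^ k) m' :=
    Nat.Coprime.pow_left k ((Nat.prime_two.coprime_iff_not_dvd).mpr hodd)
  have hdivs : (2 ^ k * m').divisors.filter (fun d => ¬ 2 ∣ d) = m'.divisors := by
    ext d
    simp only [Finset.mem_filter, Nat.mem_divisors]
    constructor
    · rintro ⟨⟨hd, _⟩, h2⟩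
      refine ⟨Nat.Coprime.dvd_of_dvd_mul_left ?_ hd, hm'.ne'⟩
      exact Nat.Coprime.pow_right k ((Nat.prime_two.coprime_iff_not_dvd).mpr h2).symm
    · rintro ⟨hd, _⟩
      exact ⟨⟨hd.mul_left _, hm.ne'⟩, fun h2 => hodd (h2.trans hd)⟩
  rcases Nat.eq_zero_or_pos k with rfl | hkpos
  · -- k = 0 : m odd
    simp only [pow_zero, one_mul] at *
    have hcongr : ∀ d ∈ m'.divisors, (-1 : ℤ) ^ (m' + d) * d = d := by
      intro d hd
      have hdm : d ∣ m' := (Nat.mem_divisors.mp hd).1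
      have hdo : ¬ 2 ∣ d := fun h => hodd (h.trans hdm)
      have : Even (m' + d) :=
        Odd.add_odd (Nat.odd_iff.mpr (Nat.two_dvd_ne_zero.mp hodd))
          (Nat.odd_iff.mpr (Nat.two_dvd_ne_zero.mp hdo))
      rw [this.neg_one_pow, one_mul]
    rw [Finset.sum_congr rfl hcongr]
    have : |(2 : ℤ) ^ (0 + 1) - 3| = 1 := by norm_num
    rw [this]
    simp [sigma]
  · -- k ≥ 1 : m even
    have hme : Even (2 ^ k * m') :=
      even_iff_two_dvd.mpr ((dvd_pow_self 2 hkpos.ne').mul_right m')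
    have hcongr : ∀ d ∈ (2 ^ k * m').divisors, (-1 : ℤ) ^ (2 ^ k * m' + d) * d
        = (-1 : ℤ) ^ d * d := by
      intro d _
      rw [pow_add, hme.neg_one_pow, one_mul]
    rw [Finset.sum_congr rfl hcongr]
    -- split sum into even and odd divisors
    rw [← Finset.sum_filter_add_sum_filter_not (2 ^ k * m').divisors (fun d => 2 ∣ d)]
    have he : ∑ d ∈ (2 ^ k * m').divisors.filter (fun d => 2 ∣ d), (-1 : ℤ) ^ d * d
        = ∑ d ∈ (2 ^ k * m').divisors.filter (fun d => 2 ∣ d), (d : ℤ) := by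
      refine Finset.sum_congr rfl fun d hd => ?_
      have : Even d := even_iff_two_dvd.mpr (Finset.mem_filter.mp hd).2
      rw [this.neg_one_pow, one_mul]
    have ho : ∑ d ∈ (2 ^ k * m').divisors.filter (fun d => ¬ 2 ∣ d), (-1 : ℤ) ^ d * d
        = -∑ d ∈ m'.divisors, (d : ℤ) := by
      rw [hdivs, ← Finset.sum_neg_distrib]
      refine Finset.sum_congr rfl fun d hd => ?_
      have hdo : ¬ 2 ∣ d := fun h => hodd (h.trans (Nat.mem_divisors.mp hd).1)
      have : Odd d := Nat.odd_iff.mpr (Nat.two_dvd_ne_zero.mp hdo)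
      rw [this.neg_one_pow]; ring
    have htot : ∑ d ∈ (2 ^ k * m').divisors.filter (fun d => 2 ∣ d), (d : ℤ)
        = (sigma (2 ^ k * m') : ℤ) - ∑ d ∈ m'.divisors, (d : ℤ) := by
      have := Finset.sum_filter_add_sum_filter_not (2 ^ k * m').divisors
        (fun d => 2 ∣ d) (fun d => (d : ℤ))
      rw [hdivs] at this
      have hs : (sigma (2 ^ k * m') : ℤ) = ∑ d ∈ (2 ^ k * m').divisors, (d : ℤ) := by
        simp [sigma]
      rw [hs, ← this]; ring
    rw [he, ho, htot]
    have hsmul : (sigma (2 ^ k * m') : ℤ) = ((2 : ℤ) ^ (k + 1) - 1) * (sigma m' : ℤ) := by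
      have h1 : sigma (2 ^ k * m') = sigma (2 ^ k) * sigma m' :=
        Nat.Coprime.sum_divisors_mul hcop
      have h2 : (sigma (2 ^ k) : ℤ) = (2 : ℤ) ^ (k + 1) - 1 := by
        have : (sigma (2 ^ k) : ℤ) = ∑ i ∈ Finset.range (k + 1), (2 : ℤ) ^ i := by
          simp [sigma, Nat.sum_divisors_prime_pow Nat.prime_two]
        rw [this, geomSumTwo]
      rw [h1]; push_cast; rw [h2]
    have habs : |(2 : ℤ) ^ (k + 1) - 3| = (2 : ℤ) ^ (k + 1) - 3 := by
      rw [abs_of_nonneg]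
      have : (2 : ℤ) ^ 2 ≤ 2 ^ (k + 1) :=
        pow_le_pow_right₀ (by norm_num) (by omega)
      linarith
    have hsm : (∑ d ∈ m'.divisors, (d : ℤ)) = (sigma m' : ℤ) := by simp [sigma]
    rw [hsm, hsmul, habs]
    ring
end

section
/- Let m be a positive even integer with 4 ∤ m. Then S(x,m) = S(x/2, m/2) for all real x ≥ 0, where S(x,m) = ∑_{n≤x} r(n)r(n+m) and r is the sum-of-two-squares counting function. More precisely: #{(a,b,c,d)∈ℤ⁴ : c²+d²≤x, a²+b²−c²−d²=m} = #{(a,b,c,d)∈ℤ⁴ : c²+d²≤x/2, a²+b²−c²−d²=m/2}. -/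
private lemma sq_mod4 (t : ℤ) : t ^ 2 % 4 = 0 ∨ t ^ 2 % 4 = 1 := by
  rcases Int.even_or_odd t with ⟨k, rfl⟩ | ⟨k, rfl⟩
  · left
    obtain ⟨s, hs⟩ : ∃ s, (k + k) ^ 2 = 4 * s := ⟨k ^ 2, by ring⟩
    rw [hs]; omega
  · right
    obtain ⟨s, hs⟩ : ∃ s, (2 * k + 1) ^ 2 = 4 * s + 1 := ⟨k ^ 2 + k, by ring⟩
    rw [hs]; omega

theorem stmt_2 (m : ℕ) (hm : 0 < m) (h2 : 2 ∣ m) (h4 : ¬ 4 ∣ m) (x : ℝ) (hx : 0 ≤ x) :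
    Nat.card {q : (ℤ × ℤ) × ℤ × ℤ //
        ((q.2.1 ^ 2 + q.2.2 ^ 2 : ℤ) : ℝ) ≤ x ∧
        q.1.1 ^ 2 + q.1.2 ^ 2 - q.2.1 ^ 2 - q.2.2 ^ 2 = (m : ℤ)} =
      Nat.card {q : (ℤ × ℤ) × ℤ × ℤ //
        ((q.2.1 ^ 2 + q.2.2 ^ 2 : ℤ) : ℝ) ≤ x / 2 ∧
        q.1.1 ^ 2 + q.1.2 ^ 2 - q.2.1 ^ 2 - q.2.2 ^ 2 = ((m / 2 : ℕ) : ℤ)} := by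
  have hm4 : (m : ℤ) % 4 = 2 := by
    have : m % 4 = 2 := by omega
    omega
  have hmd : (2 : ℤ) * ((m / 2 : ℕ) : ℤ) = (m : ℤ) := by
    have : 2 * (m / 2) = m := by omega
    exact_mod_cast this
  -- the bijection from the right-hand set to the left-hand set
  set f : {q : (ℤ × ℤ) × ℤ × ℤ //
        ((q.2.1 ^ 2 + q.2.2 ^ 2 : ℤ) : ℝ) ≤ x / 2 ∧
        q.1.1 ^ 2 + q.1.2 ^ 2 - q.2.1 ^ 2 - q.2.2 ^ 2 = ((m / 2 : ℕ) : ℤ)} →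
      {q : (ℤ × ℤ) × ℤ × ℤ //
        ((q.2.1 ^ 2 + q.2.2 ^ 2 : ℤ) : ℝ) ≤ x ∧
        q.1.1 ^ 2 + q.1.2 ^ 2 - q.2.1 ^ 2 - q.2.2 ^ 2 = (m : ℤ)} :=
    fun w =>
      ⟨⟨⟨w.1.1.1 + w.1.1.2, w.1.1.1 - w.1.1.2⟩,
        w.1.2.1 + w.1.2.2, w.1.2.1 - w.1.2.2⟩, by
        obtain ⟨⟨⟨p, q⟩, r, s⟩, hle, heq⟩ := w
        constructor
        · have h1 : ((r + s) ^ 2 + (r - s) ^ 2 : ℤ) = 2 * (r ^ 2 + s ^ 2) := by ring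
          simp only at hle ⊢
          rw [h1]
          push_cast at hle ⊢
          linarith
        · simp only at heq ⊢
          have : (p + q) ^ 2 + (p - q) ^ 2 - (r + s) ^ 2 - (r - s) ^ 2 =
              2 * (p ^ 2 + q ^ 2 - r ^ 2 - s ^ 2) := by ring
          rw [this, heq, hmd]⟩ with hf
  refine (Nat.card_congr (Equiv.ofBijective f ⟨?_, ?_⟩)).symm
  · rintro ⟨⟨⟨p, q⟩, r, s⟩, hp⟩ ⟨⟨⟨p', q'⟩, r', s'⟩, hp'⟩ h
    simp only [hf, Subtype.mk.injEq, Prod.mk.injEq] at h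
    simp only [Subtype.mk.injEq, Prod.mk.injEq]
    omega
  · rintro ⟨⟨⟨a, b⟩, c, d⟩, hle, heq⟩
    simp only at hle heq
    -- parity: a²+b² and c²+d² are both even
    have key2 : ∀ A B C D : ℤ, (A % 4 = 0 ∨ A % 4 = 1) → (B % 4 = 0 ∨ B % 4 = 1) →
        (C % 4 = 0 ∨ C % 4 = 1) → (D % 4 = 0 ∨ D % 4 = 1) →
        A + B - C - D = (m : ℤ) → (A + B) % 2 = 0 ∧ (C + D) % 2 = 0 := by
      intros A B C D h1 h2 h3 h4 h5
      omega
    have hev := key2 _ _ _ _ (sq_mod4 a) (sq_mod4 b) (sq_mod4 c) (sq_mod4 d) heq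
    have hab : Even (a + b) := by
      have h1 : Even (a ^ 2 + b ^ 2) := Int.even_iff.mpr hev.1
      simp only [Int.even_add, Int.even_pow] at h1 ⊢
      tauto
    have hcd : Even (c + d) := by
      have h1 : Even (c ^ 2 + d ^ 2) := Int.even_iff.mpr hev.2
      simp only [Int.even_add, Int.even_pow] at h1 ⊢
      tauto
    obtain ⟨p0, hp0⟩ := hab
    obtain ⟨r0, hr0⟩ := hcd
    -- a = p + q, b = p - q with p = (a+b)/2, q = (a-b)/2
    refine ⟨⟨⟨⟨p0, a - p0⟩, r0, c - r0⟩, ?_, ?_⟩, ?_⟩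
    · simp only
      have h1 : (r0 ^ 2 + (c - r0) ^ 2 : ℤ) * 2 = c ^ 2 + d ^ 2 := by
        have : d = r0 + r0 - c := by omega
        rw [this]; ring
      have h2 : ((r0 ^ 2 + (c - r0) ^ 2 : ℤ) : ℝ) * 2 = ((c ^ 2 + d ^ 2 : ℤ) : ℝ) := by
        exact_mod_cast congrArg (fun z : ℤ => (z : ℝ)) h1
      linarith
    · simp only
      have hb : b = p0 + p0 - a := by omega
      have hd : d = r0 + r0 - c := by omega
      have h1 : 2 * (p0 ^ 2 + (a - p0) ^ 2 - r0 ^ 2 - (c - r0) ^ 2) =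
          a ^ 2 + b ^ 2 - c ^ 2 - d ^ 2 := by
        rw [hb, hd]; ring
      have h2 : 2 * (p0 ^ 2 + (a - p0) ^ 2 - r0 ^ 2 - (c - r0) ^ 2) =
          2 * ((m / 2 : ℕ) : ℤ) := by rw [h1, heq, hmd]
      omega
    · simp only [hf, Subtype.mk.injEq, Prod.mk.injEq]
      refine ⟨⟨?_, ?_⟩, ?_, ?_⟩ <;> omega
end

section
/- Let m be a positive integer divisible by 4 and x ≥ 0. Define S(x,m) = #{(a,b,c,d)∈ℤ⁴ : c²+d²≤x, a²+b²−c²−d²=m} and A(x,m) = #{(a,b,c,d)∈ℤ⁴ : c²+d²≤x, a²+b²−c²−d²=m, a≡c (mod 2), b≡d (mod 2)}. Then S(x,m) = 2·A(x,m) − S(x/2, m/2). -/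
/-- `S x m` counts integer quadruples `(a,b,c,d)` with `c²+d² ≤ x` and
`a²+b²−c²−d² = m`. -/
noncomputable def S (x : ℝ) (m : ℕ) : ℕ :=
  Nat.card {q : (ℤ × ℤ) × ℤ × ℤ //
    ((q.2.1 ^ 2 + q.2.2 ^ 2 : ℤ) : ℝ) ≤ x ∧
    q.1.1 ^ 2 + q.1.2 ^ 2 - q.2.1 ^ 2 - q.2.2 ^ 2 = (m : ℤ)}

/-- `A x m` is the subcount of `S x m` where moreover `a ≡ c (mod 2)` and
`b ≡ d (mod 2)`. -/
noncomputable def A (x : ℝ) (m : ℕ) : ℕ :=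
  Nat.card {q : (ℤ × ℤ) × ℤ × ℤ //
    ((q.2.1 ^ 2 + q.2.2 ^ 2 : ℤ) : ℝ) ≤ x ∧
    q.1.1 ^ 2 + q.1.2 ^ 2 - q.2.1 ^ 2 - q.2.2 ^ 2 = (m : ℤ) ∧
    (2 : ℤ) ∣ q.1.1 - q.2.1 ∧ (2 : ℤ) ∣ q.1.2 - q.2.2}

private lemma sq_form (n : ℤ) :
    ∃ p, (n ^ 2 = 4 * p ∧ 2 ∣ n) ∨ (n ^ 2 = 4 * p + 1 ∧ ¬ 2 ∣ n) := by
  rcases Int.even_or_odd n with ⟨k, hk⟩ | ⟨k, hk⟩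
  · exact ⟨k ^ 2, Or.inl ⟨by subst hk; ring, ⟨k, by omega⟩⟩⟩
  · exact ⟨k ^ 2 + k, Or.inr ⟨by subst hk; ring, by omega⟩⟩

private lemma parity_split (a b c d : ℤ) (h : (4 : ℤ) ∣ a ^ 2 + b ^ 2 - c ^ 2 - d ^ 2) :
    (2 ∣ a - c ∧ 2 ∣ b - d) ∨ (2 ∣ a - d ∧ 2 ∣ b - c) := by
  obtain ⟨pa, ha⟩ := sq_form a
  obtain ⟨pb, hb⟩ := sq_form b
  obtain ⟨pc, hc⟩ := sq_form c
  obtain ⟨pd, hd⟩ := sq_form d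
  rcases ha with ⟨ea, wa⟩ | ⟨ea, wa⟩ <;> rcases hb with ⟨eb, wb⟩ | ⟨eb, wb⟩ <;>
    rcases hc with ⟨ec, wc⟩ | ⟨ec, wc⟩ <;> rcases hd with ⟨ed, wd⟩ | ⟨ed, wd⟩ <;>
    rw [ea, eb, ec, ed] at h <;> omega

private lemma sq_parity (n : ℤ) : (2 : ℤ) ∣ n ^ 2 - n := by
  obtain ⟨p, h⟩ := sq_form n
  rcases h with ⟨e, w⟩ | ⟨e, w⟩ <;> rw [e] <;> omega

private lemma sq_bound {z N : ℤ} (h : z ^ 2 ≤ N) : -N ≤ z ∧ z ≤ N := by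
  have h1 : |z| ≤ z ^ 2 := by
    calc |z| ≤ |z| ^ 2 := Int.le_self_sq _
    _ = z ^ 2 := sq_abs z
  exact abs_le.mp (h1.trans h)

private def TSet (x : ℝ) (m : ℕ) : Set ((ℤ × ℤ) × ℤ × ℤ) :=
  {q | ((q.2.1 ^ 2 + q.2.2 ^ 2 : ℤ) : ℝ) ≤ x ∧
    q.1.1 ^ 2 + q.1.2 ^ 2 - q.2.1 ^ 2 - q.2.2 ^ 2 = (m : ℤ)}

private def ASet (x : ℝ) (m : ℕ) : Set ((ℤ × ℤ) × ℤ × ℤ) :=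
  {q | ((q.2.1 ^ 2 + q.2.2 ^ 2 : ℤ) : ℝ) ≤ x ∧
    q.1.1 ^ 2 + q.1.2 ^ 2 - q.2.1 ^ 2 - q.2.2 ^ 2 = (m : ℤ) ∧
    (2 : ℤ) ∣ q.1.1 - q.2.1 ∧ (2 : ℤ) ∣ q.1.2 - q.2.2}

private def BSet (x : ℝ) (m : ℕ) : Set ((ℤ × ℤ) × ℤ × ℤ) :=
  {q | ((q.2.1 ^ 2 + q.2.2 ^ 2 : ℤ) : ℝ) ≤ x ∧
    q.1.1 ^ 2 + q.1.2 ^ 2 - q.2.1 ^ 2 - q.2.2 ^ 2 = (m : ℤ) ∧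
    (2 : ℤ) ∣ q.1.1 - q.2.2 ∧ (2 : ℤ) ∣ q.1.2 - q.2.1}

private lemma TSet_finite (x : ℝ) (m : ℕ) : (TSet x m).Finite := by
  set N : ℤ := (m : ℤ) + (⌈x⌉₊ : ℤ) with hN
  apply Set.Finite.subset (Set.finite_Icc ((-N, -N), (-N, -N)) ((N, N), (N, N)))
  rintro ⟨⟨a, b⟩, c, d⟩ ⟨h1, h2⟩
  have hceil : ((c ^ 2 + d ^ 2 : ℤ) : ℝ) ≤ ((⌈x⌉₊ : ℤ) : ℝ) := by
    refine h1.trans ?_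
    exact_mod_cast Nat.le_ceil x
  have hcd : c ^ 2 + d ^ 2 ≤ (⌈x⌉₊ : ℤ) := by exact_mod_cast hceil
  have hm0 : (0 : ℤ) ≤ (m : ℤ) := Int.natCast_nonneg m
  have hc2 : c ^ 2 ≤ N := by nlinarith [sq_nonneg d]
  have hd2 : d ^ 2 ≤ N := by nlinarith [sq_nonneg c]
  have ha2 : a ^ 2 ≤ N := by nlinarith [sq_nonneg b]
  have hb2 : b ^ 2 ≤ N := by nlinarith [sq_nonneg a]
  have Ba := sq_bound ha2
  have Bb := sq_bound hb2
  have Bc := sq_bound hc2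
  have Bd := sq_bound hd2
  simp only [Set.mem_Icc, Prod.mk_le_mk]
  exact ⟨⟨⟨Ba.1, Bb.1⟩, Bc.1, Bd.1⟩, ⟨Ba.2, Bb.2⟩, Bc.2, Bd.2⟩

private lemma ASet_subset (x : ℝ) (m : ℕ) : ASet x m ⊆ TSet x m := by
  rintro q ⟨h1, h2, _⟩; exact ⟨h1, h2⟩

private lemma BSet_subset (x : ℝ) (m : ℕ) : BSet x m ⊆ TSet x m := by
  rintro q ⟨h1, h2, _⟩; exact ⟨h1, h2⟩

private lemma union_eq (x : ℝ) (m : ℕ) (h4 : 4 ∣ m) :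
    ASet x m ∪ BSet x m = TSet x m := by
  ext ⟨⟨a, b⟩, c, d⟩
  simp only [ASet, BSet, TSet, Set.mem_union, Set.mem_setOf_eq]
  constructor
  · rintro (⟨h1, h2, _⟩ | ⟨h1, h2, _⟩) <;> exact ⟨h1, h2⟩
  · rintro ⟨h1, h2⟩
    have hdvd : (4 : ℤ) ∣ a ^ 2 + b ^ 2 - c ^ 2 - d ^ 2 := by
      rw [h2]; exact_mod_cast h4
    rcases parity_split a b c d hdvd with ⟨p1, p2⟩ | ⟨p1, p2⟩
    · exact Or.inl ⟨h1, h2, p1, p2⟩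
    · exact Or.inr ⟨h1, h2, p1, p2⟩

private lemma f_image (x : ℝ) (m : ℕ) :
    (fun q : (ℤ × ℤ) × ℤ × ℤ => (q.1, q.2.2, q.2.1)) '' ASet x m = BSet x m := by
  ext ⟨⟨a, b⟩, c, d⟩
  simp only [ASet, BSet, Set.mem_image, Set.mem_setOf_eq, Prod.mk.injEq, Prod.ext_iff]
  constructor
  · rintro ⟨⟨⟨a', b'⟩, c', d'⟩, ⟨h1, h2, p1, p2⟩, ⟨ha, hb⟩, hc, hd⟩
    simp only at ha hb hc hd h1 h2 p1 p2
    subst ha; subst hb; subst hc; subst hd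
    refine ⟨by push_cast at h1 ⊢; linarith, by linarith, p1, p2⟩
  · rintro ⟨h1, h2, p3, p4⟩
    exact ⟨((a, b), (d, c)),
      ⟨by push_cast at h1 ⊢; linarith, by linarith, p3, p4⟩,
      ⟨rfl, rfl⟩, rfl, rfl⟩

private lemma g_image (x : ℝ) (m : ℕ) (h4 : 4 ∣ m) :
    (fun q : (ℤ × ℤ) × ℤ × ℤ =>
        ((q.1.1 + q.1.2, q.1.1 - q.1.2), (q.2.1 + q.2.2, q.2.1 - q.2.2))) ''
      TSet (x / 2) (m / 2) = ASet x m ∩ BSet x m := by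
  obtain ⟨t, ht⟩ := h4
  have hmZ : (m : ℤ) = 4 * t := by exact_mod_cast ht
  have hm2 : ((m / 2 : ℕ) : ℤ) = 2 * t := by
    have : m / 2 = 2 * t := by omega
    rw [this]; push_cast; ring
  ext ⟨⟨a, b⟩, c, d⟩
  simp only [TSet, ASet, BSet, Set.mem_image, Set.mem_inter_iff, Set.mem_setOf_eq,
    Prod.mk.injEq, Prod.ext_iff]
  constructor
  · rintro ⟨⟨⟨u1, v1⟩, u2, v2⟩, ⟨hx2, hd2⟩, ⟨ea, eb⟩, ec, ed⟩
    simp only at hx2 hd2 ea eb ec ed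
    subst ea; subst eb; subst ec; subst ed
    rw [hm2] at hd2
    obtain ⟨k1, hk1⟩ := sq_parity u1
    obtain ⟨k2, hk2⟩ := sq_parity v1
    obtain ⟨k3, hk3⟩ := sq_parity u2
    obtain ⟨k4, hk4⟩ := sq_parity v2
    have hc2 : ((u2 + v2) ^ 2 + (u2 - v2) ^ 2 : ℤ) = 2 * (u2 ^ 2 + v2 ^ 2) := by ring
    have hxg : (((u2 + v2) ^ 2 + (u2 - v2) ^ 2 : ℤ) : ℝ) ≤ x := by
      rw [hc2]; push_cast at hx2 ⊢; linarith
    have hdg : (u1 + v1) ^ 2 + (u1 - v1) ^ 2 - (u2 + v2) ^ 2 - (u2 - v2) ^ 2 = (m : ℤ) := by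
      have : ((u1 + v1) ^ 2 + (u1 - v1) ^ 2 - (u2 + v2) ^ 2 - (u2 - v2) ^ 2 : ℤ)
          = 2 * (u1 ^ 2 + v1 ^ 2 - u2 ^ 2 - v2 ^ 2) := by ring
      rw [this, hd2, hmZ]; ring
    refine ⟨⟨hxg, hdg, ⟨t - k1 - k2 + k3 + k4, by linarith⟩,
        ⟨t - k1 - k2 + k3 + k4 - v1 + v2, by linarith⟩⟩,
      hxg, hdg, ⟨t - k1 - k2 + k3 + k4 + v2, by linarith⟩,
      ⟨t - k1 - k2 + k3 + k4 - v1, by linarith⟩⟩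
  · rintro ⟨⟨hx1, hdm, p1, p2⟩, -, -, p3, p4⟩
    obtain ⟨u1, v1, ea, eb⟩ : ∃ u v : ℤ, a = u + v ∧ b = u - v :=
      ⟨(a + b) / 2, (a - b) / 2, by omega, by omega⟩
    obtain ⟨u2, v2, ec, ed⟩ : ∃ u v : ℤ, c = u + v ∧ d = u - v :=
      ⟨(c + d) / 2, (c - d) / 2, by omega, by omega⟩
    have hsum : (2 * (u2 ^ 2 + v2 ^ 2) : ℤ) = c ^ 2 + d ^ 2 := by
      rw [ec, ed]; ring
    have hxg : ((u2 ^ 2 + v2 ^ 2 : ℤ) : ℝ) ≤ x / 2 := by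
      have : ((2 * (u2 ^ 2 + v2 ^ 2) : ℤ) : ℝ) ≤ x := by rw [hsum]; exact hx1
      push_cast at this ⊢; linarith
    have hiden : a ^ 2 + b ^ 2 - c ^ 2 - d ^ 2
        = 2 * (u1 ^ 2 + v1 ^ 2 - u2 ^ 2 - v2 ^ 2) := by
      rw [ea, eb, ec, ed]; ring
    have hdg : u1 ^ 2 + v1 ^ 2 - u2 ^ 2 - v2 ^ 2 = ((m / 2 : ℕ) : ℤ) := by
      rw [hm2]; linarith [hdm, hiden, hmZ]
    exact ⟨((u1, v1), (u2, v2)), ⟨hxg, hdg⟩, ⟨ea.symm, eb.symm⟩, ec.symm, ed.symm⟩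

theorem stmt_3 (m : ℕ) (hm : 0 < m) (h4 : 4 ∣ m) (x : ℝ) (hx : 0 ≤ x) :
    (S x m : ℤ) = 2 * (A x m : ℤ) - (S (x / 2) (m / 2) : ℤ) := by
  have hfT : (TSet x m).Finite := TSet_finite x m
  have hfA : (ASet x m).Finite := hfT.subset (ASet_subset x m)
  have hfB : (BSet x m).Finite := hfT.subset (BSet_subset x m)
  have hIE := Set.ncard_union_add_ncard_inter (ASet x m) (BSet x m) hfA hfB
  have hU : (ASet x m ∪ BSet x m).ncard = (TSet x m).ncard := by
    rw [union_eq x m h4]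
  have hBA : (BSet x m).ncard = (ASet x m).ncard := by
    rw [← f_image x m]
    apply Set.ncard_image_of_injective
    intro ⟨⟨a, b⟩, c, d⟩ ⟨⟨a', b'⟩, c', d'⟩ h
    simp only [Prod.mk.injEq] at h
    obtain ⟨⟨h1, h2⟩, h3, h4⟩ := h
    simp [h1, h2, h3, h4]
  have hI : (ASet x m ∩ BSet x m).ncard = (TSet (x / 2) (m / 2)).ncard := by
    rw [← g_image x m h4]
    apply Set.ncard_image_of_injective
    intro ⟨⟨a, b⟩, c, d⟩ ⟨⟨a', b'⟩, c', d'⟩ h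
    simp only [Prod.mk.injEq] at h
    obtain ⟨⟨h1, h2⟩, h3, h4⟩ := h
    simp only [Prod.mk.injEq]
    omega
  have eS : S x m = (TSet x m).ncard := Nat.card_coe_set_eq _
  have eS' : S (x / 2) (m / 2) = (TSet (x / 2) (m / 2)).ncard := Nat.card_coe_set_eq _
  have eA : A x m = (ASet x m).ncard := Nat.card_coe_set_eq _
  rw [hU, hBA, hI] at hIE
  rw [eS, eS', eA]
  push_cast
  omega
end

section
/- Let d be a positive integer, t > 0 real, and define u(z,w) = |z−w|²/(4·Im z·Im w) for z, w in the upper half-plane. Then the number of integer matrices γ = (a b; u v) with determinant d² such that u(γ·i, i) < t is at most ∑_{0 ≤ n < 4d²t} r(n)·r(4d² + n), where γ·i denotes the Möbius action and r(n) is the number of representations of n as a sum of two squares. -/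
open Complex

/-- `r n` is the number of representations of `n` as an ordered sum of two squares
of integers. -/
noncomputable def r (n : ℕ) : ℕ := Nat.card {p : ℤ × ℤ // p.1 ^ 2 + p.2 ^ 2 = (n : ℤ)}

/-- The point-pair invariant `u(z,w) = |z−w|²/(4 Im z Im w)` on the upper half-plane,
expressed for complex numbers. -/
noncomputable def uDist (z w : ℂ) : ℝ :=
  ‖z - w‖ ^ 2 / (4 * z.im * w.im)

lemma neg_le_sq (x : ℤ) : -x ≤ x ^ 2 := by
  have := Int.le_self_sq (-x)
  simpa using this

instance finite_reps (n : ℤ) : Finite {p : ℤ × ℤ // p.1 ^ 2 + p.2 ^ 2 = n} := by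
  have hfin : {p : ℤ × ℤ | p.1 ^ 2 + p.2 ^ 2 = n}.Finite := by
    apply (Set.finite_Icc ((-n, -n) : ℤ × ℤ) (n, n)).subset
    rintro ⟨x, y⟩ (h : x ^ 2 + y ^ 2 = n)
    have h1 := Int.le_self_sq x
    have h2 := Int.le_self_sq y
    have h3 := neg_le_sq x
    have h4 := neg_le_sq y
    have h5 := sq_nonneg x
    have h6 := sq_nonneg y
    simp only [Set.mem_Icc, Prod.le_def]
    constructor <;> constructor <;> nlinarith
  exact hfin.to_subtype

lemma uDist_eq (a b u v : ℤ) (d : ℕ) (hd : 0 < d)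
    (hdet : a * v - b * u = (d : ℤ) ^ 2) :
    uDist (((a : ℂ) * I + (b : ℂ)) / ((u : ℂ) * I + (v : ℂ))) I
      = (((v : ℝ) - a) ^ 2 + ((b : ℝ) + u) ^ 2) / (4 * (d : ℝ) ^ 2) := by
  have hS : (0:ℝ) < (u : ℝ) ^ 2 + (v : ℝ) ^ 2 := by
    rcases eq_or_ne u 0 with hu | hu
    · rcases eq_or_ne v 0 with hv | hv
      · exfalso; subst hu; subst hv
        simp at hdet
        have : (0:ℤ) < (d:ℤ)^2 := by positivity
        omega
      · have : (0:ℝ) < (v:ℝ)^2 := by positivity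
        nlinarith [sq_nonneg (u:ℝ)]
    · have : (0:ℝ) < (u:ℝ)^2 := by positivity
      nlinarith [sq_nonneg (v:ℝ)]
  have hw : ((u : ℂ) * I + (v : ℂ)) ≠ 0 := by
    intro h
    have hre : ((u : ℂ) * I + (v : ℂ)).re = 0 := by rw [h]; simp
    have him : ((u : ℂ) * I + (v : ℂ)).im = 0 := by rw [h]; simp
    simp at hre him
    rw [hre, him] at hS
    simp at hS
  have hnormSq : Complex.normSq ((u : ℂ) * I + (v : ℂ)) = (u : ℝ) ^ 2 + (v : ℝ) ^ 2 := by
    simp [Complex.normSq_apply]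
    ring
  have him : ((((a : ℂ) * I + (b : ℂ)) / ((u : ℂ) * I + (v : ℂ))).im)
      = (d : ℝ) ^ 2 / ((u : ℝ) ^ 2 + (v : ℝ) ^ 2) := by
    rw [Complex.div_im, hnormSq]
    have : ((a : ℝ) * (v : ℝ) - (b : ℝ) * (u : ℝ)) = (d : ℝ) ^ 2 := by
      exact_mod_cast congrArg (fun z : ℤ => (z : ℝ)) hdet
    simp only [Complex.add_im, Complex.add_re, Complex.mul_im, Complex.mul_re,
      Complex.I_re, Complex.I_im, Complex.intCast_re, Complex.intCast_im]
    field_simp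
    linarith
  have hsub : (((a : ℂ) * I + (b : ℂ)) / ((u : ℂ) * I + (v : ℂ))) - I
      = (((b : ℂ) + u) + ((a : ℂ) - v) * I) / ((u : ℂ) * I + (v : ℂ)) := by
    rw [eq_div_iff hw, sub_mul, div_mul_cancel₀ _ hw]
    linear_combination (-(u:ℂ)) * Complex.I_sq
  have habs : ‖(((a : ℂ) * I + (b : ℂ)) / ((u : ℂ) * I + (v : ℂ))) - I‖ ^ 2
      = (((b : ℝ) + u) ^ 2 + ((a : ℝ) - v) ^ 2) / ((u : ℝ) ^ 2 + (v : ℝ) ^ 2) := by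
    rw [hsub, Complex.sq_norm, Complex.normSq_div, hnormSq]
    congr 1
    simp [Complex.normSq_apply]
    ring
  rw [uDist, habs, him, Complex.I_im]
  have hd' : (0:ℝ) < (d:ℝ)^2 := by positivity
  field_simp
  ring

theorem stmt_7 (d : ℕ) (hd : 0 < d) (t : ℝ) (ht : 0 < t) :
    Nat.card {q : (ℤ × ℤ) × ℤ × ℤ //
        q.1.1 * q.2.2 - q.1.2 * q.2.1 = (d : ℤ) ^ 2 ∧
        uDist (((q.1.1 : ℂ) * I + (q.1.2 : ℂ)) / ((q.2.1 : ℂ) * I + (q.2.2 : ℂ))) I < t}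
      ≤ ∑ n ∈ Finset.range ⌈4 * (d : ℝ) ^ 2 * t⌉₊, r n * r (4 * d ^ 2 + n) := by
  classical
  set N := ⌈4 * (d : ℝ) ^ 2 * t⌉₊ with hN
  haveI instF : ∀ n : ℤ, Fintype {p : ℤ × ℤ // p.1 ^ 2 + p.2 ^ 2 = n} :=
    fun n => Fintype.ofFinite _
  have key : ∀ a b u v : ℤ, a * v - b * u = (d : ℤ) ^ 2 →
      uDist (((a : ℂ) * I + (b : ℂ)) / ((u : ℂ) * I + (v : ℂ))) I < t →
      (((v - a) ^ 2 + (b + u) ^ 2).toNat < N ∧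
       (v - a) ^ 2 + (b + u) ^ 2 = ((((v - a) ^ 2 + (b + u) ^ 2).toNat : ℕ) : ℤ) ∧
       (a + v) ^ 2 + (b - u) ^ 2
         = ((4 * d ^ 2 + ((v - a) ^ 2 + (b + u) ^ 2).toNat : ℕ) : ℤ)) := by
    intro a b u v hdet hu
    have hnn : (0:ℤ) ≤ (v - a) ^ 2 + (b + u) ^ 2 := by positivity
    have htn : ((((v - a) ^ 2 + (b + u) ^ 2).toNat : ℕ) : ℤ) = (v - a) ^ 2 + (b + u) ^ 2 :=
      Int.toNat_of_nonneg hnn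
    rw [uDist_eq a b u v d hd hdet] at hu
    have h4 : (0:ℝ) < 4 * (d:ℝ) ^ 2 := by positivity
    rw [div_lt_iff₀ h4] at hu
    refine ⟨?_, htn.symm, ?_⟩
    · rw [Nat.lt_ceil]
      have h' : ((((v - a) ^ 2 + (b + u) ^ 2).toNat : ℕ) : ℝ)
          = ((((v - a) ^ 2 + (b + u) ^ 2 : ℤ)) : ℝ) := by
        exact_mod_cast congrArg (fun z : ℤ => (z : ℝ)) htn
      rw [h']
      push_cast
      nlinarith
    · push_cast [htn]
      linear_combination (4 : ℤ) * hdet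
  have hcard : Nat.card (Σ n : Fin N,
      ({p : ℤ × ℤ // p.1 ^ 2 + p.2 ^ 2 = ((n : ℕ) : ℤ)} ×
       {p : ℤ × ℤ // p.1 ^ 2 + p.2 ^ 2 = ((4 * d ^ 2 + (n : ℕ) : ℕ) : ℤ)}))
      = ∑ n ∈ Finset.range N, r n * r (4 * d ^ 2 + n) := by
    rw [Nat.card_eq_fintype_card, Fintype.card_sigma,
      ← Fin.sum_univ_eq_sum_range (fun k => r k * r (4 * d ^ 2 + k)) N]
    apply Finset.sum_congr rfl
    intro n _
    rw [Fintype.card_prod]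
    simp only [r]
    rw [Nat.card_eq_fintype_card, Nat.card_eq_fintype_card]
  rw [← hcard]
  apply Nat.card_le_card_of_injective
    (f := fun q => (⟨⟨((q.1.2.2 - q.1.1.1) ^ 2 + (q.1.1.2 + q.1.2.1) ^ 2).toNat,
        (key q.1.1.1 q.1.1.2 q.1.2.1 q.1.2.2 q.2.1 q.2.2).1⟩,
      ⟨(q.1.2.2 - q.1.1.1, q.1.1.2 + q.1.2.1),
        (key q.1.1.1 q.1.1.2 q.1.2.1 q.1.2.2 q.2.1 q.2.2).2.1⟩,
      ⟨(q.1.1.1 + q.1.2.2, q.1.1.2 - q.1.2.1),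
        (key q.1.1.1 q.1.1.2 q.1.2.1 q.1.2.2 q.2.1 q.2.2).2.2⟩⟩))
  rintro ⟨⟨⟨a1, b1⟩, u1, v1⟩, hd1, hu1⟩ ⟨⟨⟨a2, b2⟩, u2, v2⟩, hd2, hu2⟩ h
  have e1 := congrArg (fun x : (Σ n : Fin N,
      ({p : ℤ × ℤ // p.1 ^ 2 + p.2 ^ 2 = ((n : ℕ) : ℤ)} ×
       {p : ℤ × ℤ // p.1 ^ 2 + p.2 ^ 2 = ((4 * d ^ 2 + (n : ℕ) : ℕ) : ℤ)})) => x.2.1.1) h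
  have e2 := congrArg (fun x : (Σ n : Fin N,
      ({p : ℤ × ℤ // p.1 ^ 2 + p.2 ^ 2 = ((n : ℕ) : ℤ)} ×
       {p : ℤ × ℤ // p.1 ^ 2 + p.2 ^ 2 = ((4 * d ^ 2 + (n : ℕ) : ℕ) : ℤ)})) => x.2.2.1) h
  simp only [Prod.mk.injEq] at e1 e2
  apply Subtype.ext
  simp only [Prod.mk.injEq]
  omega
end

section
/- Let x ≥ 1, m ≥ 1 be real parameters and 0 < θ < 1/2. Define F(Δ,T) = xΔ + x^{1/2}T^{1/2}·min(1,(TΔ)^{-3/2})·(1 + min(m^θ, m^{1/2}T^{-1})) for 0 < Δ < 1 and T ≥ 4. Then if x ≥ m^{3/2−θ}, one has inf_{0<Δ<1} sup_{T≥4} F(Δ,T) ≪ x^{2/3} + m^{1/4+θ/2}·x^{1/2}, and if m ≤ x < m^{3/2−θ}, one has inf_{0<Δ<1} sup_{T≥4} F(Δ,T) ≪ m^{2θ/3}·x^{2/3}, where the implied constants are absolute. -/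
/-- The optimization function arising from bounding the spectral error term. -/
noncomputable def F (x m θ Δ T : ℝ) : ℝ :=
  x * Δ + x ^ ((1 : ℝ) / 2) * T ^ ((1 : ℝ) / 2) *
    min 1 ((T * Δ) ^ (-(3 : ℝ) / 2)) *
    (1 + min (m ^ θ) (m ^ ((1 : ℝ) / 2) * T⁻¹))

lemma lemA {Δ T : ℝ} (hΔ : 0 < Δ) (hT : 0 < T) :
    T ^ ((1:ℝ)/2) * min 1 ((T*Δ) ^ (-(3:ℝ)/2)) ≤ Δ ^ (-(1:ℝ)/2) := by
  rcases le_total (T*Δ) 1 with h | h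
  · have h1 : T ≤ Δ⁻¹ := by
      rw [← one_div]
      exact (le_div_iff₀ hΔ).mpr h
    calc T ^ ((1:ℝ)/2) * min 1 ((T*Δ) ^ (-(3:ℝ)/2))
        ≤ T ^ ((1:ℝ)/2) * 1 :=
          mul_le_mul_of_nonneg_left (min_le_left _ _) (Real.rpow_nonneg hT.le _)
      _ = T ^ ((1:ℝ)/2) := mul_one _
      _ ≤ (Δ⁻¹) ^ ((1:ℝ)/2) := Real.rpow_le_rpow hT.le h1 (by norm_num)
      _ = Δ ^ (-(1:ℝ)/2) := by
          rw [Real.inv_rpow hΔ.le, ← Real.rpow_neg hΔ.le]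
          norm_num
  · have h1 : T⁻¹ ≤ Δ := by
      rw [inv_eq_one_div]
      exact (div_le_iff₀ hT).mpr (by linarith)
    calc T ^ ((1:ℝ)/2) * min 1 ((T*Δ) ^ (-(3:ℝ)/2))
        ≤ T ^ ((1:ℝ)/2) * ((T*Δ) ^ (-(3:ℝ)/2)) :=
          mul_le_mul_of_nonneg_left (min_le_right _ _) (Real.rpow_nonneg hT.le _)
      _ = T⁻¹ * Δ ^ (-(3:ℝ)/2) := by
          rw [Real.mul_rpow hT.le hΔ.le, ← mul_assoc, ← Real.rpow_add hT, ← Real.rpow_neg_one T]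
          norm_num
      _ ≤ Δ * Δ ^ (-(3:ℝ)/2) :=
          mul_le_mul_of_nonneg_right h1 (Real.rpow_nonneg hΔ.le _)
      _ = Δ ^ (-(1:ℝ)/2) := by
          rw [show Δ * Δ ^ (-(3:ℝ)/2) = Δ ^ ((1:ℝ) + -(3:ℝ)/2) by
            rw [Real.rpow_add hΔ, Real.rpow_one]]
          norm_num

lemma lemB {a b : ℝ} (ha : 0 ≤ a) (hb : 0 ≤ b) :
    min a b ≤ a ^ ((1:ℝ)/2) * b ^ ((1:ℝ)/2) := by
  have hmin : 0 ≤ min a b := le_min ha hb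
  have h : min a b = (min a b) ^ ((1:ℝ)/2) * (min a b) ^ ((1:ℝ)/2) := by
    rw [← Real.rpow_add' hmin (by norm_num)]
    norm_num
  rw [h]
  exact mul_le_mul (Real.rpow_le_rpow hmin (min_le_left a b) (by norm_num))
    (Real.rpow_le_rpow hmin (min_le_right a b) (by norm_num))
    (Real.rpow_nonneg hmin _) (Real.rpow_nonneg ha _)

lemma lemC {m T : ℝ} (hm' : 0 < m) (hT : 0 < T) (θ : ℝ) :
    T ^ ((1:ℝ)/2) * min (m ^ θ) (m ^ ((1:ℝ)/2) * T⁻¹) ≤ m ^ ((1:ℝ)/4 + θ/2) := by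
  have hm : 0 ≤ m := hm'.le
  have hTr : (0:ℝ) < T ^ ((1:ℝ)/2) := Real.rpow_pos_of_pos hT _
  have h1 : min (m ^ θ) (m ^ ((1:ℝ)/2) * T⁻¹)
      ≤ (m ^ θ) ^ ((1:ℝ)/2) * (m ^ ((1:ℝ)/2) * T⁻¹) ^ ((1:ℝ)/2) :=
    lemB (Real.rpow_nonneg hm _) (mul_nonneg (Real.rpow_nonneg hm _) (inv_nonneg.mpr hT.le))
  have h2 : (m ^ θ) ^ ((1:ℝ)/2) * (m ^ ((1:ℝ)/2) * T⁻¹) ^ ((1:ℝ)/2)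
      = m ^ ((1:ℝ)/4 + θ/2) * (T ^ ((1:ℝ)/2))⁻¹ := by
    rw [Real.mul_rpow (Real.rpow_nonneg hm _) (inv_nonneg.mpr hT.le),
      ← Real.rpow_mul hm, ← Real.rpow_mul hm,
      Real.inv_rpow hT.le, ← mul_assoc, ← Real.rpow_add hm']
    ring_nf
  calc T ^ ((1:ℝ)/2) * min (m ^ θ) (m ^ ((1:ℝ)/2) * T⁻¹)
      ≤ T ^ ((1:ℝ)/2) * (m ^ ((1:ℝ)/4 + θ/2) * (T ^ ((1:ℝ)/2))⁻¹) := by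
        refine mul_le_mul_of_nonneg_left ?_ hTr.le
        rw [← h2]; exact h1
    _ = m ^ ((1:ℝ)/4 + θ/2) := by
        rw [mul_comm, mul_assoc, inv_mul_cancel₀ hTr.ne', mul_one]

lemma master {x m θ Δ T : ℝ} (hx : 0 < x) (hm : 0 < m) (hΔ : 0 < Δ) (hT : 0 < T) :
    F x m θ Δ T ≤ x * Δ + x ^ ((1:ℝ)/2) * Δ ^ (-(1:ℝ)/2) +
      x ^ ((1:ℝ)/2) * m ^ ((1:ℝ)/4 + θ/2) := by
  unfold F
  set mn := min 1 ((T*Δ) ^ (-(3:ℝ)/2)) with hmndef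
  set M := min (m ^ θ) (m ^ ((1:ℝ)/2) * T⁻¹) with hMdef
  have hmn0 : 0 ≤ mn := le_min zero_le_one (Real.rpow_nonneg (by positivity) _)
  have hmn1 : mn ≤ 1 := min_le_left _ _
  have hM0 : 0 ≤ M := le_min (Real.rpow_nonneg hm.le _)
    (mul_nonneg (Real.rpow_nonneg hm.le _) (inv_nonneg.mpr hT.le))
  have hxr : (0:ℝ) ≤ x ^ ((1:ℝ)/2) := Real.rpow_nonneg hx.le _
  have e : x ^ ((1:ℝ)/2) * T ^ ((1:ℝ)/2) * mn * (1 + M)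
      = x ^ ((1:ℝ)/2) * (T ^ ((1:ℝ)/2) * mn) + (x ^ ((1:ℝ)/2) * mn) * (T ^ ((1:ℝ)/2) * M) := by
    ring
  rw [e]
  have b1 : x ^ ((1:ℝ)/2) * (T ^ ((1:ℝ)/2) * mn) ≤ x ^ ((1:ℝ)/2) * Δ ^ (-(1:ℝ)/2) :=
    mul_le_mul_of_nonneg_left (lemA hΔ hT) hxr
  have b2 : (x ^ ((1:ℝ)/2) * mn) * (T ^ ((1:ℝ)/2) * M) ≤ x ^ ((1:ℝ)/2) * m ^ ((1:ℝ)/4 + θ/2) := by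
    have h3 : x ^ ((1:ℝ)/2) * mn ≤ x ^ ((1:ℝ)/2) := by
      nlinarith
    exact mul_le_mul h3 (lemC hm hT θ)
      (mul_nonneg (Real.rpow_nonneg hT.le _) hM0) hxr
  linarith

lemma master2 {x m θ Δ T : ℝ} (hx : 0 < x) (hm : 1 ≤ m) (hθ : 0 ≤ θ) (hΔ : 0 < Δ)
    (hT : 0 < T) :
    F x m θ Δ T ≤ x * Δ + 2 * m ^ θ * (x ^ ((1:ℝ)/2) * Δ ^ (-(1:ℝ)/2)) := by
  unfold F
  set mn := min 1 ((T*Δ) ^ (-(3:ℝ)/2)) with hmndef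
  set M := min (m ^ θ) (m ^ ((1:ℝ)/2) * T⁻¹) with hMdef
  have hmn0 : 0 ≤ mn := le_min zero_le_one (Real.rpow_nonneg (by positivity) _)
  have hmθ : 1 ≤ m ^ θ := Real.one_le_rpow hm hθ
  have hM : M ≤ m ^ θ := min_le_left _ _
  have h1M : 1 + M ≤ 2 * m ^ θ := by linarith
  have hxr : (0:ℝ) ≤ x ^ ((1:ℝ)/2) := Real.rpow_nonneg hx.le _
  have hM0 : 0 ≤ M := le_min (Real.rpow_nonneg (by linarith) _)
    (mul_nonneg (Real.rpow_nonneg (by linarith) _) (inv_nonneg.mpr hT.le))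
  have b1 : x ^ ((1:ℝ)/2) * T ^ ((1:ℝ)/2) * mn * (1 + M)
      ≤ x ^ ((1:ℝ)/2) * Δ ^ (-(1:ℝ)/2) * (2 * m ^ θ) := by
    have h3 : x ^ ((1:ℝ)/2) * T ^ ((1:ℝ)/2) * mn = x ^ ((1:ℝ)/2) * (T ^ ((1:ℝ)/2) * mn) := by
      ring
    rw [h3]
    exact mul_le_mul (mul_le_mul_of_nonneg_left (lemA hΔ hT) hxr) h1M
      (by linarith) (by positivity)
  linarith [b1]

lemma half_rpow {a : ℝ} (ha : 0 < a) :
    (a / 2) ^ (-(1:ℝ)/2) ≤ 2 * a ^ (-(1:ℝ)/2) := by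
  have h : (a / 2) ^ (-(1:ℝ)/2) = a ^ (-(1:ℝ)/2) * ((2:ℝ)⁻¹) ^ (-(1:ℝ)/2) := by
    rw [div_eq_mul_inv, Real.mul_rpow ha.le (by norm_num)]
  rw [h]
  have h2 : ((2:ℝ)⁻¹) ^ (-(1:ℝ)/2) = (2:ℝ) ^ ((1:ℝ)/2) := by
    rw [Real.inv_rpow (by norm_num), ← Real.rpow_neg (by norm_num)]
    norm_num
  have h3 : (2:ℝ) ^ ((1:ℝ)/2) ≤ 2 := by
    calc (2:ℝ) ^ ((1:ℝ)/2) ≤ (2:ℝ) ^ (1:ℝ) :=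
          Real.rpow_le_rpow_of_exponent_le (by norm_num) (by norm_num)
      _ = 2 := Real.rpow_one 2
  rw [h2]
  calc a ^ (-(1:ℝ)/2) * (2:ℝ) ^ ((1:ℝ)/2) ≤ a ^ (-(1:ℝ)/2) * 2 :=
        mul_le_mul_of_nonneg_left h3 (Real.rpow_nonneg ha.le _)
    _ = 2 * a ^ (-(1:ℝ)/2) := mul_comm _ _

theorem stmt_11 :
    ∃ K : ℝ, 0 < K ∧ ∀ x m θ : ℝ, 1 ≤ x → 1 ≤ m → 0 < θ → θ < 1 / 2 →
      ((m ^ ((3 : ℝ) / 2 - θ) ≤ x →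
          ∃ Δ : ℝ, 0 < Δ ∧ Δ < 1 ∧ ∀ T : ℝ, 4 ≤ T →
            F x m θ Δ T ≤
              K * (x ^ ((2 : ℝ) / 3) + m ^ ((1 : ℝ) / 4 + θ / 2) * x ^ ((1 : ℝ) / 2))) ∧
        (m ≤ x → x < m ^ ((3 : ℝ) / 2 - θ) →
          ∃ Δ : ℝ, 0 < Δ ∧ Δ < 1 ∧ ∀ T : ℝ, 4 ≤ T →
            F x m θ Δ T ≤ K * (m ^ (2 * θ / 3) * x ^ ((2 : ℝ) / 3)))) := by
  refine ⟨5, by norm_num, ?_⟩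
  intro x m θ hx hm hθ hθ'
  have hx0 : (0:ℝ) < x := by linarith
  have hm0 : (0:ℝ) < m := by linarith
  constructor
  · intro _
    refine ⟨x ^ (-(1:ℝ)/3) / 2, by positivity, ?_, ?_⟩
    · have : x ^ (-(1:ℝ)/3) ≤ 1 :=
        Real.rpow_le_one_of_one_le_of_nonpos hx (by norm_num)
      linarith
    · intro T hT
      have hT0 : (0:ℝ) < T := by linarith
      have hΔ0 : (0:ℝ) < x ^ (-(1:ℝ)/3) / 2 := by positivity
      refine le_trans (master hx0 hm0 hΔ0 hT0) ?_
      have e1 : x * (x ^ (-(1:ℝ)/3) / 2) = x ^ ((2:ℝ)/3) / 2 := by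
        rw [show x * (x ^ (-(1:ℝ)/3) / 2) = x ^ (1:ℝ) * x ^ (-(1:ℝ)/3) / 2 by
          rw [Real.rpow_one]; ring, ← Real.rpow_add hx0]
        norm_num
      have e2 : (x ^ (-(1:ℝ)/3) / 2) ^ (-(1:ℝ)/2) ≤ 2 * x ^ ((1:ℝ)/6) := by
        refine le_trans (half_rpow (by positivity)) ?_
        rw [← Real.rpow_mul hx0.le]
        norm_num
      have e3 : x ^ ((1:ℝ)/2) * (2 * x ^ ((1:ℝ)/6)) = 2 * x ^ ((2:ℝ)/3) := by
        rw [mul_comm ((2:ℝ)) (x ^ ((1:ℝ)/6)), ← mul_assoc, ← Real.rpow_add hx0]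
        ring_nf
      have b : x ^ ((1:ℝ)/2) * (x ^ (-(1:ℝ)/3) / 2) ^ (-(1:ℝ)/2) ≤ 2 * x ^ ((2:ℝ)/3) := by
        calc x ^ ((1:ℝ)/2) * (x ^ (-(1:ℝ)/3) / 2) ^ (-(1:ℝ)/2)
            ≤ x ^ ((1:ℝ)/2) * (2 * x ^ ((1:ℝ)/6)) :=
              mul_le_mul_of_nonneg_left e2 (Real.rpow_nonneg hx0.le _)
          _ = 2 * x ^ ((2:ℝ)/3) := e3
      have h23 : (0:ℝ) ≤ x ^ ((2:ℝ)/3) := Real.rpow_nonneg hx0.le _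
      have hmm : (0:ℝ) ≤ m ^ ((1:ℝ)/4 + θ/2) * x ^ ((1:ℝ)/2) := by positivity
      rw [e1]
      nlinarith [b, h23, hmm]
  · intro hmx hxm
    have hb0 : (0:ℝ) < m ^ (2*θ/3) * x ^ (-(1:ℝ)/3) := by positivity
    refine ⟨m ^ (2*θ/3) * x ^ (-(1:ℝ)/3) / 2, by positivity, ?_, ?_⟩
    · have h1 : m ^ (2*θ/3) ≤ m ^ ((1:ℝ)/3) :=
        Real.rpow_le_rpow_of_exponent_le hm (by linarith)
      have h2 : m ^ ((1:ℝ)/3) ≤ x ^ ((1:ℝ)/3) :=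
        Real.rpow_le_rpow hm0.le hmx (by norm_num)
      have h3 : m ^ (2*θ/3) * x ^ (-(1:ℝ)/3) ≤ 1 := by
        have := mul_le_mul_of_nonneg_right (h1.trans h2)
          (Real.rpow_nonneg hx0.le (-(1:ℝ)/3))
        have e : x ^ ((1:ℝ)/3) * x ^ (-(1:ℝ)/3) = 1 := by
          rw [← Real.rpow_add hx0]; norm_num
        linarith [this, e.le]
      linarith
    · intro T hT
      have hT0 : (0:ℝ) < T := by linarith
      refine le_trans (master2 hx0 hm hθ.le (by positivity) hT0) ?_
      have e1 : x * (m ^ (2*θ/3) * x ^ (-(1:ℝ)/3) / 2) = m ^ (2*θ/3) * x ^ ((2:ℝ)/3) / 2 := by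
        rw [show x * (m ^ (2*θ/3) * x ^ (-(1:ℝ)/3) / 2)
            = m ^ (2*θ/3) * (x ^ (1:ℝ) * x ^ (-(1:ℝ)/3)) / 2 by rw [Real.rpow_one]; ring,
          ← Real.rpow_add hx0]
        norm_num
      have e2 : (m ^ (2*θ/3) * x ^ (-(1:ℝ)/3) / 2) ^ (-(1:ℝ)/2)
          ≤ 2 * (m ^ (-θ/3) * x ^ ((1:ℝ)/6)) := by
        have em : (m ^ (2*θ/3)) ^ (-(1:ℝ)/2) = m ^ (-θ/3) := by
          rw [← Real.rpow_mul hm0.le]; congr 1; ring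
        have ex : (x ^ (-(1:ℝ)/3)) ^ (-(1:ℝ)/2) = x ^ ((1:ℝ)/6) := by
          rw [← Real.rpow_mul hx0.le]; norm_num
        refine le_trans (half_rpow hb0) ?_
        rw [Real.mul_rpow (Real.rpow_nonneg hm0.le _) (Real.rpow_nonneg hx0.le _), em, ex]
      have e3 : m ^ θ * m ^ (-θ/3) = m ^ (2*θ/3) := by
        rw [← Real.rpow_add hm0]; congr 1; ring
      have e4 : x ^ ((1:ℝ)/2) * x ^ ((1:ℝ)/6) = x ^ ((2:ℝ)/3) := by
        rw [← Real.rpow_add hx0]; norm_num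
      have h5 : x ^ ((1:ℝ)/2) * (m ^ (2*θ/3) * x ^ (-(1:ℝ)/3) / 2) ^ (-(1:ℝ)/2)
          ≤ x ^ ((1:ℝ)/2) * (2 * (m ^ (-θ/3) * x ^ ((1:ℝ)/6))) :=
        mul_le_mul_of_nonneg_left e2 (Real.rpow_nonneg hx0.le _)
      have h6 : 2 * m ^ θ * (x ^ ((1:ℝ)/2) * (m ^ (2*θ/3) * x ^ (-(1:ℝ)/3) / 2) ^ (-(1:ℝ)/2))
          ≤ 2 * m ^ θ * (x ^ ((1:ℝ)/2) * (2 * (m ^ (-θ/3) * x ^ ((1:ℝ)/6)))) :=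
        mul_le_mul_of_nonneg_left h5 (by positivity)
      have h7 : 2 * m ^ θ * (x ^ ((1:ℝ)/2) * (2 * (m ^ (-θ/3) * x ^ ((1:ℝ)/6))))
          = 4 * ((m ^ θ * m ^ (-θ/3)) * (x ^ ((1:ℝ)/2) * x ^ ((1:ℝ)/6))) := by ring
      rw [h7, e3, e4] at h6
      have hpos : (0:ℝ) ≤ m ^ (2*θ/3) * x ^ ((2:ℝ)/3) := by positivity
      rw [e1]
      linarith
end
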